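/- arXiv:1201.2104 — 2 statements merged into one kernel-verified Lean document; each statement's English description precedes it below -/
import Mathlib

section
/- For the other direction of the primary decomposition: if a squarefree monomial X_{ρ₁}⋯X_{ρ_s} does not lie in B(Σ) = (X_τ̂ : τ ∈ Σ), then the complementary set Σ(1) ∖ {ρ₁,…,ρ_s} is not contained in the ray set of any cone of Σ, and consequently X_{ρ₁}⋯X_{ρ_s} does not lie in the ideal generated by the variables indexed by Σ(1) ∖ {ρ₁,…,ρ_s}. -/
open MvPolynomial

/-- If the squarefree monomial `∏_{ρ ∈ S} X_ρ` is not in `B(Σ) = (X_τ̂ : τ ∈ Σ)`,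
then the complement `Σ(1) ∖ S` is not contained in the ray set of any cone, and
the monomial is not in the ideal generated by the variables indexed by the complement. -/
theorem not_mem_irrelevant_ideal_complement
    {ι : Type} {k : Type} [Fintype ι] [DecidableEq ι] [Field k]
    (F : Finset (Finset ι)) (S : Finset ι)
    (h : (∏ ρ ∈ S, X ρ : MvPolynomial ι k) ∉
      Ideal.span {p : MvPolynomial ι k |
        ∃ τ ∈ F, p = ∏ ρ ∈ Finset.univ \ τ, X ρ}) :
    (∀ τ ∈ F, ¬ (Finset.univ \ S) ⊆ τ) ∧
    (∏ ρ ∈ S, X ρ : MvPolynomial ι k) ∉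
      Ideal.span ((fun ρ => (X ρ : MvPolynomial ι k)) ''
        ((Finset.univ \ S : Finset ι) : Set ι)) := by
  constructor
  · intro τ hτ hsub
    apply h
    have hsub' : (Finset.univ \ τ : Finset ι) ⊆ S := by
      intro x hx
      simp only [Finset.mem_sdiff, Finset.mem_univ, true_and] at hx
      by_contra hxS
      exact hx (hsub (by simp [hxS]))
    have : (∏ ρ ∈ S, X ρ : MvPolynomial ι k) =
        (∏ ρ ∈ Finset.univ \ τ, X ρ) * ∏ ρ ∈ S \ (Finset.univ \ τ), X ρ := by
      rw [← Finset.prod_union (Finset.disjoint_sdiff)]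
      congr 1
      rw [Finset.union_sdiff_of_subset hsub']
    rw [this]
    exact Ideal.mul_mem_right _ _ (Ideal.subset_span ⟨τ, hτ, rfl⟩)
  · rw [mem_ideal_span_X_image]
    push_neg
    have hm : (∏ ρ ∈ S, X ρ : MvPolynomial ι k) =
        monomial (∑ ρ ∈ S, Finsupp.single ρ 1) 1 := by
      rw [monomial_sum_one]
      rfl
    refine ⟨∑ ρ ∈ S, Finsupp.single ρ 1, ?_, ?_⟩
    · rw [hm, mem_support_iff, coeff_monomial, if_pos rfl]
      exact one_ne_zero
    · intro i hi
      simp only [Finset.coe_sdiff, Finset.coe_univ, Set.mem_diff, Set.mem_univ, true_and,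
        Finset.mem_coe] at hi
      rw [Finsupp.finset_sum_apply]
      refine Finset.sum_eq_zero fun ρ hρ => ?_
      rw [Finsupp.single_apply, if_neg]
      rintro rfl
      exact hi hρ
end

section
/- For a complete simplicial stacky fan 𝚺 = (ℤ^d, Σ, {v_ρ}), define χ(𝚺) = Σ_{σ ∈ Σ_max} 1/D_σ where D_σ = |det of the v_ρ for ρ ∈ σ(1)| is the stacky multiplicity of a maximal cone σ (assuming primitive lattice generation N_σ = ℤ^d). If 𝚺_σ is the stacky star subdivision of 𝚺 at a cone σ of dimension s (with new vector v₀ = Σ_{ρ ∈ σ(1)} v_ρ), then χ(𝚺_σ) = χ(𝚺) + (s−1)/D_σ. -/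
/-- For a complete simplicial stacky fan with maximal cones `F` and
`χ = Σ_{σ ∈ F} 1/D_σ`, where `D_σ = [ℤ^d : ℤ⟨v_ρ, ρ ∈ σ(1)⟩]` (the stacky
multiplicity, assuming `N_σ = ℤ^d`), the stacky star subdivision of `F` at a
maximal cone `σ₀` (with new vector `v₀ = Σ_{ρ ∈ σ₀(1)} v_ρ` on a new ray `ρ₀`)
satisfies `χ(𝚺_σ) = χ(𝚺) + (s−1)/D_{σ₀}` where `s = dim σ₀`. -/
theorem euler_char_star_subdivision
    {ι : Type} [DecidableEq ι] {d : ℕ}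
    (v : ι → Fin d → ℤ) (F : Finset (Finset ι)) (σ0 : Finset ι)
    (hσ0 : σ0 ∈ F) (hcard : σ0.card = d)
    (ρ0 : ι) (hfresh : ∀ τ ∈ F, ρ0 ∉ τ)
    (hv0 : v ρ0 = ∑ ρ ∈ σ0, v ρ)
    (D : Finset ι → ℕ)
    (hD : ∀ τ : Finset ι, D τ = (Submodule.span ℤ (v '' ↑τ)).toAddSubgroup.index)
    (F' : Finset (Finset ι))
    (hF' : F' = (F.erase σ0) ∪ σ0.image (fun ρ => insert ρ0 (σ0.erase ρ))) :
    (∑ τ ∈ F', (1 : ℚ) / D τ)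
      = (∑ τ ∈ F, (1 : ℚ) / D τ) + ((σ0.card : ℚ) - 1) / D σ0 := by
  have hρ0 : ρ0 ∉ σ0 := hfresh σ0 hσ0
  -- span equality for the new cones
  have hspan : ∀ ρ ∈ σ0,
      Submodule.span ℤ (v '' ↑(insert ρ0 (σ0.erase ρ)))
        = Submodule.span ℤ (v '' ↑σ0) := by
    intro ρ hρ
    apply le_antisymm
    · rw [Submodule.span_le]
      rintro x ⟨a, ha, rfl⟩
      simp only [Finset.coe_insert, Set.mem_insert_iff, Finset.mem_coe,
        Finset.mem_erase] at ha
      rcases ha with rfl | ⟨-, ha⟩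
      · rw [hv0]
        exact Submodule.sum_mem _ fun i hi =>
          Submodule.subset_span ⟨i, by simpa using hi, rfl⟩
      · exact Submodule.subset_span ⟨a, by simpa using ha, rfl⟩
    · rw [Submodule.span_le]
      rintro x ⟨a, ha, rfl⟩
      simp only [Finset.mem_coe] at ha
      by_cases haρ : a = ρ
      · subst haρ
        have hx : v a = v ρ0 - ∑ ρ' ∈ σ0.erase a, v ρ' := by
          rw [hv0, ← Finset.add_sum_erase _ _ ha]; abel
        rw [hx]
        refine sub_mem (Submodule.subset_span ⟨ρ0, by simp, rfl⟩) ?_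
        exact Submodule.sum_mem _ fun i hi =>
          Submodule.subset_span ⟨i, by simp [Finset.mem_erase.mp hi], rfl⟩
      · exact Submodule.subset_span
          ⟨a, by simp [Finset.mem_erase, haρ, ha], rfl⟩
  have hDeq : ∀ ρ ∈ σ0, D (insert ρ0 (σ0.erase ρ)) = D σ0 := by
    intro ρ hρ
    rw [hD, hD, hspan ρ hρ]
  have hdisj : Disjoint (F.erase σ0)
      (σ0.image (fun ρ => insert ρ0 (σ0.erase ρ))) := by
    rw [Finset.disjoint_left]
    intro τ hτ hτ'
    obtain ⟨ρ, hρ, rfl⟩ := Finset.mem_image.mp hτ'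
    exact hfresh _ (Finset.mem_of_mem_erase hτ) (Finset.mem_insert_self _ _)
  have hinj : Set.InjOn (fun ρ => insert ρ0 (σ0.erase ρ)) ↑σ0 := by
    intro a ha b hb hab
    by_contra hne
    have haρ0 : a ≠ ρ0 := fun h => hρ0 (h ▸ ha)
    have hmem : a ∈ insert ρ0 (σ0.erase b) :=
      Finset.mem_insert_of_mem (Finset.mem_erase.mpr ⟨hne, ha⟩)
    have hab' : insert ρ0 (σ0.erase a) = insert ρ0 (σ0.erase b) := hab
    rw [← hab'] at hmem
    rcases Finset.mem_insert.mp hmem with h | h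
    · exact haρ0 h
    · exact (Finset.mem_erase.mp h).1 rfl
  rw [hF', Finset.sum_union hdisj, Finset.sum_image hinj]
  have h1 : ∑ ρ ∈ σ0, (1 : ℚ) / D (insert ρ0 (σ0.erase ρ))
      = (σ0.card : ℚ) * (1 / D σ0) := by
    rw [Finset.sum_congr rfl (fun ρ hρ => by rw [hDeq ρ hρ])]
    simp [mul_comm]
  rw [h1, ← Finset.add_sum_erase F _ hσ0]
  have : (σ0.card : ℚ) * (1 / D σ0) = 1 / D σ0 + ((σ0.card : ℚ) - 1) / D σ0 := by
    rw [← add_div, mul_one_div]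
    ring_nf
  rw [this]; ring
end
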